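/- (Cramér's theorem, LDP upper bound) Let X_1, X_2, … be i.i.d. real random variables whose common logarithmic moment generating function Λ(t) = log E[exp(t X_1)] is finite for all t ∈ ℝ, and let I(x) = sup_{t ∈ ℝ} (t x − Λ(t)) be the Cramér rate function. Then for every closed set C ⊆ ℝ, limsup_{n → ∞} (1/n) log P((X_1 + ⋯ + X_n)/n ∈ C) ≤ −inf_{x ∈ C} I(x). -/

import Mathlib

open MeasureTheory ProbabilityTheory Filter Topology
open scoped ENNReal

/-- The Cramér rate function `I(x) = ⨆ t, (t x - Λ(t))`, as a function `ℝ → [0, ∞] ⊆ EReal`,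
where `Λ = cgf X μ` is the logarithmic moment generating function `t ↦ log E[exp (t X)]`. -/
noncomputable def cramerRate {Ω : Type*} [MeasurableSpace Ω] (X : Ω → ℝ) (μ : Measure Ω)
    (x : ℝ) : EReal :=
  ⨆ t : ℝ, ((t * x - cgf X μ t : ℝ) : EReal)

private lemma ereal_coe_mul_le {c : ℝ} (hc : 0 ≤ c) {x : EReal} {y : ℝ} (h : x ≤ (y : EReal)) :
    (c : EReal) * x ≤ ((c * y : ℝ) : EReal) := by
  rcases hc.eq_or_lt with rfl | hc
  · simp
  · induction x using EReal.rec with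
    | bot =>
        rw [EReal.coe_mul_bot_of_pos hc]
        exact bot_le
    | coe x =>
        rw [← EReal.coe_mul, EReal.coe_le_coe_iff]
        exact mul_le_mul_of_nonneg_left (EReal.coe_le_coe_iff.1 h) hc.le
    | top => exact absurd h (by simp)

private lemma jensen_cgf {Ω : Type*} [MeasurableSpace Ω] {μ : Measure Ω}
    [IsProbabilityMeasure μ] {Y : Ω → ℝ} (hY : Measurable Y)
    (hfin : ∀ t : ℝ, Integrable (fun ω => Real.exp (t * Y ω)) μ) (t : ℝ) :
    t * μ[Y] ≤ cgf Y μ t := by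
  have hYint : Integrable Y μ := by
    refine Integrable.mono' ((hfin 1).add (hfin (-1))) hY.aestronglyMeasurable
      (ae_of_all _ fun ω => ?_)
    simp only [Pi.add_apply, one_mul, neg_one_mul, Real.norm_eq_abs]
    rw [abs_le]
    constructor
    · nlinarith [Real.add_one_le_exp (-(Y ω)), Real.exp_pos (Y ω)]
    · nlinarith [Real.add_one_le_exp (Y ω), Real.exp_pos (-(Y ω))]
  have hJ : Real.exp (t * μ[Y]) ≤ mgf Y μ t := by
    have h := convexOn_exp.map_integral_le (f := fun ω => t * Y ω)
      Real.continuous_exp.continuousOn isClosed_univ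
      (ae_of_all _ fun ω => Set.mem_univ _) (hYint.const_mul t) (hfin t)
    rw [integral_const_mul] at h
    exact h
  have hpos : 0 < mgf Y μ t := mgf_pos (hfin t)
  rw [cgf]
  exact (Real.le_log_iff_exp_le hpos).2 hJ

/-- Cramér's theorem, LDP upper bound: if `X 0, X 1, …` are i.i.d. real random variables whose
common logarithmic moment generating function is finite everywhere, then for every closed set
`C ⊆ ℝ`, `limsup_n (1/n) log P((X 0 + ⋯ + X (n-1))/n ∈ C) ≤ - inf_{x ∈ C} I x`, where `I` is
the Cramér rate function (logarithms of probabilities are taken in `EReal` via `ENNReal.log`,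
and the infimum over the empty set is `∞`). -/
theorem limsup_log_measure_mean_mem_closed_le {Ω : Type*} [MeasurableSpace Ω]
    (μ : Measure Ω) [IsProbabilityMeasure μ] (X : ℕ → Ω → ℝ)
    (hmeas : ∀ i, Measurable (X i))
    (hindep : iIndepFun X μ)
    (hident : ∀ i, IdentDistrib (X i) (X 0) μ μ)
    (hfin : ∀ t : ℝ, Integrable (fun ω => Real.exp (t * X 0 ω)) μ)
    (C : Set ℝ) (hC : IsClosed C) :
    limsup (fun n : ℕ =>
        (((n : ℝ)⁻¹ : ℝ) : EReal) *
          ENNReal.log (μ {ω | (∑ i ∈ Finset.range n, X i ω) / (n : ℝ) ∈ C})) atTop ≤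
      -(⨅ x ∈ C, cramerRate (X 0) μ x) := by
  classical
  set m : ℝ := μ[X 0] with hm
  set F : ℕ → EReal := fun n : ℕ =>
    (((n : ℝ)⁻¹ : ℝ) : EReal) *
      ENNReal.log (μ {ω | (∑ i ∈ Finset.range n, X i ω) / (n : ℝ) ∈ C}) with hF
  -- integrability and cgf facts
  have hexp_meas : ∀ t : ℝ, Measurable fun x : ℝ => Real.exp (t * x) :=
    fun t => (measurable_id.const_mul t).exp
  have hint : ∀ (t : ℝ) (i : ℕ), Integrable (fun ω => Real.exp (t * X i ω)) μ :=
    fun t i => (((hident i).comp (hexp_meas t)).integrable_iff).2 (hfin t)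
  have hcgf : ∀ (t : ℝ) (i : ℕ), cgf (X i) μ t = cgf (X 0) μ t := by
    intro t i
    simp only [cgf, mgf]
    congr 1
    exact ((hident i).comp (hexp_meas t)).integral_eq
  have hcgf_sum : ∀ (t : ℝ) (n : ℕ),
      cgf (∑ i ∈ Finset.range n, X i) μ t = n * cgf (X 0) μ t := by
    intro t n
    rw [hindep.cgf_sum hmeas (fun i _ => hint t i),
      Finset.sum_congr rfl fun i _ => hcgf t i, Finset.sum_const, Finset.card_range,
      nsmul_eq_mul]
  have hJ : ∀ t : ℝ, t * m ≤ cgf (X 0) μ t := jensen_cgf (hmeas 0) hfin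
  -- nonnegativity of the rate function
  have hI0 : ∀ x : ℝ, (0 : EReal) ≤ cramerRate (X 0) μ x := by
    intro x
    have h := le_iSup (fun t : ℝ => ((t * x - cgf (X 0) μ t : ℝ) : EReal)) 0
    rw [cramerRate]
    simpa [cgf_zero] using h
  have hr0 : (0 : EReal) ≤ ⨅ x ∈ C, cramerRate (X 0) μ x := le_iInf₂ fun x _ => hI0 x
  -- limsup ≤ 0
  have hFle : ∀ n, F n ≤ 0 := by
    intro n
    have h1 : ENNReal.log (μ {ω | (∑ i ∈ Finset.range n, X i ω) / (n : ℝ) ∈ C})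
        ≤ ((0 : ℝ) : EReal) := by
      rw [EReal.coe_zero]
      exact ENNReal.log_le_zero_iff.2 prob_le_one
    have h2 := ereal_coe_mul_le (inv_nonneg.2 (Nat.cast_nonneg n)) h1
    simpa using h2
  have hL0 : limsup F atTop ≤ 0 := limsup_le_of_le (by isBoundedDefault)
    (Eventually.of_forall hFle)
  -- main estimate
  have key : ∀ s : ℝ, 0 < s → (s : EReal) < ⨅ x ∈ C, cramerRate (X 0) μ x →
      limsup F atTop ≤ ((-s : ℝ) : EReal) := by
    intro s hs0 hsr
    have hsI : ∀ x ∈ C, (s : EReal) < cramerRate (X 0) μ x :=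
      fun x hx => hsr.trans_le (iInf₂_le x hx)
    have hmC : m ∉ C := by
      intro hmem
      have h1 : cramerRate (X 0) μ m ≤ ((s : ℝ) : EReal) := by
        rw [cramerRate]
        refine iSup_le fun t => EReal.coe_le_coe_iff.2 ?_
        have := hJ t
        linarith
      exact absurd (hsI m hmem) (not_lt.2 h1)
    -- upper half-line witness
    obtain ⟨b, t₂, ht₂0, ht₂, hbC⟩ : ∃ b t, 0 ≤ t ∧ s < t * b - cgf (X 0) μ t ∧
        ∀ x ∈ C, m ≤ x → b ≤ x := by
      by_cases hD : (C ∩ Set.Ici m).Nonempty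
      · have hbdd : BddBelow (C ∩ Set.Ici m) := ⟨m, fun x hx => hx.2⟩
        have hbmem := (hC.inter isClosed_Ici).csInf_mem hD hbdd
        obtain ⟨t, ht⟩ : ∃ t : ℝ, s < t * sInf (C ∩ Set.Ici m) - cgf (X 0) μ t := by
          have h2 := hsI _ hbmem.1
          rw [cramerRate, lt_iSup_iff] at h2
          obtain ⟨t, ht⟩ := h2
          exact ⟨t, EReal.coe_lt_coe_iff.1 ht⟩
        refine ⟨sInf (C ∩ Set.Ici m), t, ?_, ht, fun x hx hmx => csInf_le hbdd ⟨hx, hmx⟩⟩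
        by_contra hneg
        push_neg at hneg
        have h3 : t * sInf (C ∩ Set.Ici m) ≤ t * m :=
          mul_le_mul_of_nonpos_left hbmem.2 hneg.le
        have := hJ t
        linarith
      · refine ⟨s + cgf (X 0) μ 1 + 1, 1, zero_le_one, by linarith,
          fun x hx hmx => absurd ⟨hx, hmx⟩ (fun h => hD ⟨x, h⟩)⟩
    -- lower half-line witness
    obtain ⟨a, t₁, ht₁0, ht₁, haC⟩ : ∃ a t, t ≤ 0 ∧ s < t * a - cgf (X 0) μ t ∧
        ∀ x ∈ C, x ≤ m → x ≤ a := by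
      by_cases hD : (C ∩ Set.Iic m).Nonempty
      · have hbdd : BddAbove (C ∩ Set.Iic m) := ⟨m, fun x hx => hx.2⟩
        have hbmem := (hC.inter isClosed_Iic).csSup_mem hD hbdd
        obtain ⟨t, ht⟩ : ∃ t : ℝ, s < t * sSup (C ∩ Set.Iic m) - cgf (X 0) μ t := by
          have h2 := hsI _ hbmem.1
          rw [cramerRate, lt_iSup_iff] at h2
          obtain ⟨t, ht⟩ := h2
          exact ⟨t, EReal.coe_lt_coe_iff.1 ht⟩
        refine ⟨sSup (C ∩ Set.Iic m), t, ?_, ht, fun x hx hxm => le_csSup hbdd ⟨hx, hxm⟩⟩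
        by_contra hneg
        push_neg at hneg
        have h3 : t * sSup (C ∩ Set.Iic m) ≤ t * m :=
          mul_le_mul_of_nonneg_left hbmem.2 hneg.le
        have := hJ t
        linarith
      · refine ⟨-(s + cgf (X 0) μ (-1) + 1), -1, by norm_num, by linarith,
          fun x hx hxm => absurd ⟨hx, hxm⟩ (fun h => hD ⟨x, h⟩)⟩
    -- per-n measure bound
    have hn_bound : ∀ n : ℕ, 1 ≤ n →
        μ {ω | (∑ i ∈ Finset.range n, X i ω) / (n : ℝ) ∈ C}
          ≤ ENNReal.ofReal (Real.exp (-((n : ℝ) * s)) + Real.exp (-((n : ℝ) * s))) := by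
      intro n hn
      have hnpos : (0 : ℝ) < n := by exact_mod_cast hn
      have hsub : {ω | (∑ i ∈ Finset.range n, X i ω) / (n : ℝ) ∈ C} ⊆
          {ω | (∑ i ∈ Finset.range n, X i) ω ≤ (n : ℝ) * a} ∪
            {ω | (n : ℝ) * b ≤ (∑ i ∈ Finset.range n, X i) ω} := by
        intro ω hω
        simp only [Set.mem_setOf_eq, Set.mem_union, Finset.sum_apply]
        rcases le_total ((∑ i ∈ Finset.range n, X i ω) / (n : ℝ)) m with h | h
        · left
          have h1 := haC _ hω h
          rw [div_le_iff₀ hnpos] at h1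
          linarith
        · right
          have h1 := hbC _ hω h
          rw [le_div_iff₀ hnpos] at h1
          linarith
      have hS_int : ∀ t : ℝ,
          Integrable (fun ω => Real.exp (t * (∑ i ∈ Finset.range n, X i) ω)) μ :=
        fun t => hindep.integrable_exp_mul_sum hmeas (fun i _ => hint t i)
      have h_up : (μ {ω | (n : ℝ) * b ≤ (∑ i ∈ Finset.range n, X i) ω}).toReal
          ≤ Real.exp (-((n : ℝ) * s)) := by
        refine (measure_ge_le_exp_cgf ((n : ℝ) * b) ht₂0 (hS_int t₂)).trans ?_
        rw [hcgf_sum]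
        apply Real.exp_le_exp.2
        have h4 : cgf (X 0) μ t₂ - t₂ * b ≤ -s := by linarith
        calc -t₂ * ((n : ℝ) * b) + (n : ℝ) * cgf (X 0) μ t₂
            = (n : ℝ) * (cgf (X 0) μ t₂ - t₂ * b) := by ring
          _ ≤ (n : ℝ) * (-s) := mul_le_mul_of_nonneg_left h4 hnpos.le
          _ = -((n : ℝ) * s) := by ring
      have h_lo : (μ {ω | (∑ i ∈ Finset.range n, X i) ω ≤ (n : ℝ) * a}).toReal
          ≤ Real.exp (-((n : ℝ) * s)) := by
        refine (measure_le_le_exp_cgf ((n : ℝ) * a) ht₁0 (hS_int t₁)).trans ?_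
        rw [hcgf_sum]
        apply Real.exp_le_exp.2
        have h4 : cgf (X 0) μ t₁ - t₁ * a ≤ -s := by linarith
        calc -t₁ * ((n : ℝ) * a) + (n : ℝ) * cgf (X 0) μ t₁
            = (n : ℝ) * (cgf (X 0) μ t₁ - t₁ * a) := by ring
          _ ≤ (n : ℝ) * (-s) := mul_le_mul_of_nonneg_left h4 hnpos.le
          _ = -((n : ℝ) * s) := by ring
      calc μ {ω | (∑ i ∈ Finset.range n, X i ω) / (n : ℝ) ∈ C}
          ≤ μ ({ω | (∑ i ∈ Finset.range n, X i) ω ≤ (n : ℝ) * a} ∪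
              {ω | (n : ℝ) * b ≤ (∑ i ∈ Finset.range n, X i) ω}) := measure_mono hsub
        _ ≤ μ {ω | (∑ i ∈ Finset.range n, X i) ω ≤ (n : ℝ) * a} +
              μ {ω | (n : ℝ) * b ≤ (∑ i ∈ Finset.range n, X i) ω} := measure_union_le _ _
        _ ≤ ENNReal.ofReal (Real.exp (-((n : ℝ) * s))) +
              ENNReal.ofReal (Real.exp (-((n : ℝ) * s))) := by
            gcongr
            · exact (ENNReal.le_ofReal_iff_toReal_le (measure_ne_top μ _)
                (Real.exp_pos _).le).2 h_lo
            · exact (ENNReal.le_ofReal_iff_toReal_le (measure_ne_top μ _)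
                (Real.exp_pos _).le).2 h_up
        _ = ENNReal.ofReal (Real.exp (-((n : ℝ) * s)) + Real.exp (-((n : ℝ) * s))) :=
            (ENNReal.ofReal_add (Real.exp_pos _).le (Real.exp_pos _).le).symm
    -- transfer to F
    have hF_bound : ∀ n : ℕ, 1 ≤ n →
        F n ≤ (((n : ℝ)⁻¹ * Real.log 2 - s : ℝ) : EReal) := by
      intro n hn
      have hnpos : (0 : ℝ) < n := by exact_mod_cast hn
      have hlog : ENNReal.log (μ {ω | (∑ i ∈ Finset.range n, X i ω) / (n : ℝ) ∈ C})
          ≤ ((Real.log 2 - (n : ℝ) * s : ℝ) : EReal) := by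
        refine (ENNReal.log_monotone (hn_bound n hn)).trans ?_
        rw [ENNReal.log_ofReal_of_pos (by positivity)]
        apply EReal.coe_le_coe_iff.2
        have h5 : Real.exp (-((n : ℝ) * s)) + Real.exp (-((n : ℝ) * s))
            = 2 * Real.exp (-((n : ℝ) * s)) := by ring
        rw [h5, Real.log_mul two_ne_zero (Real.exp_ne_zero _), Real.log_exp]
        linarith
      have h6 := ereal_coe_mul_le (inv_nonneg.2 hnpos.le) hlog
      refine h6.trans_eq ?_
      norm_cast
      field_simp
    have hg : Tendsto (fun n : ℕ => (((n : ℝ)⁻¹ * Real.log 2 - s : ℝ) : EReal)) atTop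
        (𝓝 ((-s : ℝ) : EReal)) := by
      have h1 : Tendsto (fun n : ℕ => (n : ℝ)⁻¹ * Real.log 2 - s) atTop (𝓝 (-s)) := by
        have h2 := (tendsto_inv_atTop_nhds_zero_nat.mul_const (Real.log 2)).sub_const s
        simpa using h2
      exact (continuous_coe_real_ereal.tendsto (-s)).comp h1
    calc limsup F atTop
        ≤ limsup (fun n : ℕ => (((n : ℝ)⁻¹ * Real.log 2 - s : ℝ) : EReal)) atTop :=
          limsup_le_limsup (eventually_atTop.2 ⟨1, hF_bound⟩)
      _ = ((-s : ℝ) : EReal) := hg.limsup_eq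
  -- conclude
  by_contra hcon
  push_neg at hcon
  have h1 : -(limsup F atTop) < ⨅ x ∈ C, cramerRate (X 0) μ x :=
    EReal.neg_lt_of_neg_lt hcon
  obtain ⟨s, hs1, hs2⟩ := EReal.exists_between_coe_real h1
  have hs0 : 0 < s := by
    have h2 : (0 : EReal) ≤ -(limsup F atTop) := by
      have := EReal.neg_le_neg_iff.2 hL0
      simpa using this
    have h3 : (0 : EReal) < (s : EReal) := h2.trans_lt hs1
    exact_mod_cast h3
  have h3 := key s hs0 hs2
  have h4 : ((-s : ℝ) : EReal) < limsup F atTop := by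
    have h5 := EReal.neg_lt_of_neg_lt hs1
    rwa [← EReal.coe_neg] at h5
  exact absurd h3 (not_le.2 h4)
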